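/- arXiv:2202.09055 — 2 statements merged into one kernel-verified Lean document; each statement's English description precedes it below -/
import Mathlib

section
/- There exists a constant C > 0 (depending only on T) such that for all x, y ∈ [0,π] and all t ∈ (0,T], ∫_0^t ∫_0^π |G_{t−r}(x,z) − G_{t−r}(y,z)|² dz dr ≤ C|x−y|². -/
/-- `φ_j(x) = √(2/π)·sin(jx)`. -/
noncomputable def phi (j : ℕ) (x : ℝ) : ℝ := Real.sqrt (2 / Real.pi) * Real.sin (j * x)

/-- The Green function `G_t(x,y) = Σ_{j=1}^∞ e^{−j⁴t} φ_j(x) φ_j(y)` of `∂_t + Δ²`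
on `(0,π)` with Dirichlet boundary conditions. -/
noncomputable def G (t x y : ℝ) : ℝ :=
  ∑' j : ℕ, Real.exp (-((j : ℝ) + 1) ^ 4 * t) * phi (j + 1) x * phi (j + 1) y

open MeasureTheory Set
open scoped ENNReal NNReal

private lemma sqK : Real.sqrt (2 / Real.pi) ^ 2 = 2 / Real.pi :=
  Real.sq_sqrt (by positivity)

private lemma phi_abs_le (j : ℕ) (z : ℝ) : |phi j z| ≤ Real.sqrt (2 / Real.pi) := by
  unfold phi
  rw [abs_mul, abs_of_nonneg (Real.sqrt_nonneg _)]
  exact mul_le_of_le_one_right (Real.sqrt_nonneg _) (Real.abs_sin_le_one _)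

private lemma phi_cont (j : ℕ) : Continuous (phi j) := by
  unfold phi; fun_prop

private lemma abs_sin_sub_sin (a b : ℝ) : |Real.sin a - Real.sin b| ≤ |a - b| := by
  rw [Real.sin_sub_sin]
  calc |2 * Real.sin ((a - b) / 2) * Real.cos ((a + b) / 2)|
      = 2 * |Real.sin ((a - b) / 2)| * |Real.cos ((a + b) / 2)| := by
        rw [abs_mul, abs_mul, abs_two]
    _ ≤ 2 * |(a - b) / 2| * 1 := by
        apply mul_le_mul _ (Real.abs_cos_le_one _) (abs_nonneg _) (by positivity)
        exact mul_le_mul_of_nonneg_left Real.abs_sin_le_abs (by norm_num)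
    _ = |a - b| := by rw [abs_div, abs_two]; ring

private lemma phi_lip (j : ℕ) (x y : ℝ) :
    |phi j x - phi j y| ≤ Real.sqrt (2 / Real.pi) * j * |x - y| := by
  unfold phi
  rw [← mul_sub, abs_mul, abs_of_nonneg (Real.sqrt_nonneg _), mul_assoc]
  refine mul_le_mul_of_nonneg_left ?_ (Real.sqrt_nonneg _)
  calc |Real.sin (j * x) - Real.sin (j * y)| ≤ |(j : ℝ) * x - j * y| := abs_sin_sub_sin _ _
    _ = (j : ℝ) * |x - y| := by
        rw [← mul_sub, abs_mul, abs_of_nonneg (by positivity : (0:ℝ) ≤ (j:ℝ))]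

private lemma phi_diff_le (j : ℕ) (x y : ℝ) :
    |phi j x - phi j y| ≤ 2 * Real.sqrt (2 / Real.pi) := by
  calc |phi j x - phi j y| ≤ |phi j x| + |phi j y| := abs_sub _ _
    _ ≤ 2 * Real.sqrt (2 / Real.pi) := by
        have h1 := phi_abs_le j x; have h2 := phi_abs_le j y; linarith

private lemma int_cos_eq {c : ℝ} (hc : c ≠ 0) :
    ∫ z in (0:ℝ)..Real.pi, Real.cos (c * z) = Real.sin (c * Real.pi) / c := by
  rw [intervalIntegral.integral_comp_mul_left (fun u => Real.cos u) hc]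
  simp [integral_cos, div_eq_inv_mul]

private lemma sin_ortho (m k : ℕ) (hm : m ≠ 0) (hk : k ≠ 0) :
    ∫ z in (0:ℝ)..Real.pi, Real.sin (m * z) * Real.sin (k * z)
      = if m = k then Real.pi / 2 else 0 := by
  have hid : ∀ z : ℝ, Real.sin ((m:ℝ) * z) * Real.sin ((k:ℝ) * z)
      = (Real.cos (((m:ℝ) - k) * z) - Real.cos (((m:ℝ) + k) * z)) / 2 := by
    intro z
    rw [Real.cos_sub_cos]
    have h1 : ((((m:ℝ) - k) * z + ((m:ℝ) + k) * z) / 2) = m * z := by ring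
    have h2 : ((((m:ℝ) - k) * z - ((m:ℝ) + k) * z) / 2) = -(k * z) := by ring
    rw [h1, h2, Real.sin_neg]; ring
  have hcont : ∀ c : ℝ, IntervalIntegrable (fun z => Real.cos (c * z)) volume 0 Real.pi :=
    fun c => (Real.continuous_cos.comp (continuous_const.mul continuous_id)).intervalIntegrable _ _
  have hsum : (∫ z in (0:ℝ)..Real.pi, Real.sin (m * z) * Real.sin (k * z))
      = ((∫ z in (0:ℝ)..Real.pi, Real.cos (((m:ℝ) - k) * z))
        - (∫ z in (0:ℝ)..Real.pi, Real.cos (((m:ℝ) + k) * z))) / 2 := by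
    rw [← intervalIntegral.integral_sub (hcont _) (hcont _), ← intervalIntegral.integral_div]
    exact intervalIntegral.integral_congr fun z _ => hid z
  have hplus : (∫ z in (0:ℝ)..Real.pi, Real.cos (((m:ℝ) + k) * z)) = 0 := by
    have hm' : (0:ℝ) < m := by
      exact_mod_cast Nat.pos_of_ne_zero hm
    have hk' : (0:ℝ) ≤ k := Nat.cast_nonneg k
    have hmk : ((m:ℝ) + k) ≠ 0 := by linarith
    rw [int_cos_eq hmk]
    have : ((m:ℝ) + k) * Real.pi = ((m + k : ℕ) : ℝ) * Real.pi := by push_cast; ring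
    rw [this, Real.sin_nat_mul_pi, zero_div]
  rw [hsum, hplus]
  by_cases h : m = k
  · subst h
    simp only [sub_self, zero_mul, Real.cos_zero, if_pos rfl]
    rw [intervalIntegral.integral_const]
    simp
  · rw [if_neg h]
    have hmk : ((m:ℝ) - k) ≠ 0 := by
      intro hcontra
      exact h (Nat.cast_injective (by linarith : (m:ℝ) = k))
    rw [int_cos_eq hmk]
    have : ((m:ℝ) - k) * Real.pi = (((m:ℤ) - k : ℤ) : ℝ) * Real.pi := by push_cast; ring
    rw [this, Real.sin_int_mul_pi]
    norm_num

private lemma phi_ortho (j k : ℕ) :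
    ∫ z in (0:ℝ)..Real.pi, phi (j+1) z * phi (k+1) z = if j = k then 1 else 0 := by
  have hpi := Real.pi_pos
  have hid : ∀ z : ℝ, phi (j+1) z * phi (k+1) z
      = (2 / Real.pi) * (Real.sin (((j+1 : ℕ):ℝ) * z) * Real.sin (((k+1 : ℕ):ℝ) * z)) := by
    intro z; unfold phi
    rw [show (Real.sqrt (2/Real.pi) * Real.sin (((j+1:ℕ):ℝ) * z))
          * (Real.sqrt (2/Real.pi) * Real.sin (((k+1:ℕ):ℝ) * z))
        = (Real.sqrt (2/Real.pi) * Real.sqrt (2/Real.pi))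
          * (Real.sin (((j+1:ℕ):ℝ) * z) * Real.sin (((k+1:ℕ):ℝ) * z)) from by ring,
      Real.mul_self_sqrt (by positivity)]
  rw [intervalIntegral.integral_congr (fun z _ => hid z),
      intervalIntegral.integral_const_mul,
      sin_ortho (j+1) (k+1) (Nat.succ_ne_zero j) (Nat.succ_ne_zero k)]
  by_cases h : j = k
  · subst h; rw [if_pos rfl, if_pos rfl]; field_simp
  · rw [if_neg (by omega : ¬ (j+1 = k+1)), if_neg h, mul_zero]

private lemma summable_exp4 {s : ℝ} (hs : 0 < s) :
    Summable fun j : ℕ => Real.exp (-((j:ℝ)+1)^4 * s) := by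
  have h0 : 0 ≤ Real.exp (-s) := (Real.exp_pos _).le
  have h1 : Real.exp (-s) < 1 := Real.exp_lt_one_iff.mpr (by linarith)
  have hg : Summable fun j : ℕ => Real.exp (-s) ^ (j+1) := by
    simpa [pow_succ] using (summable_geometric_of_lt_one h0 h1).mul_right (Real.exp (-s))
  refine hg.of_nonneg_of_le (fun j => (Real.exp_pos _).le) (fun j => ?_)
  have hrw : Real.exp (-s) ^ (j+1) = Real.exp (((j:ℝ)+1) * (-s)) := by
    rw [show ((j:ℝ)+1) = ((j+1 : ℕ) : ℝ) from by push_cast; ring, Real.exp_nat_mul]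
  rw [hrw]
  apply Real.exp_le_exp.mpr
  have hj1 : (1:ℝ) ≤ (j:ℝ)+1 := by
    have : (0:ℝ) ≤ (j:ℝ) := Nat.cast_nonneg j
    linarith
  have hpow : (j:ℝ)+1 ≤ ((j:ℝ)+1)^4 := le_self_pow₀ hj1 (by norm_num)
  nlinarith

private lemma summable_expphi {s : ℝ} (hs : 0 < s) (x z : ℝ) :
    Summable fun j : ℕ => Real.exp (-((j:ℝ)+1)^4 * s) * phi (j+1) x * phi (j+1) z := by
  refine Summable.of_norm_bounded
    ((summable_exp4 hs).mul_right (Real.sqrt (2/Real.pi) * Real.sqrt (2/Real.pi))) (fun j => ?_)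
  rw [Real.norm_eq_abs, abs_mul, abs_mul, abs_of_nonneg (Real.exp_pos _).le, mul_assoc]
  exact mul_le_mul_of_nonneg_left
    (mul_le_mul (phi_abs_le _ _) (phi_abs_le _ _) (abs_nonneg _) (Real.sqrt_nonneg _))
    (Real.exp_pos _).le

private lemma Gdiff_eq (x y : ℝ) {s : ℝ} (hs : 0 < s) (z : ℝ) :
    G s x z - G s y z =
      ∑' j : ℕ, (Real.exp (-((j:ℝ)+1)^4 * s) * (phi (j+1) x - phi (j+1) y)) * phi (j+1) z := by
  unfold G
  rw [← Summable.tsum_sub (summable_expphi hs x z) (summable_expphi hs y z)]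
  congr 1; funext j; ring

private lemma lint_bound {f : ℝ → ℝ} {c : ℝ} (hf : ∀ z, |f z| ≤ c) :
    ∫⁻ z, ‖f z‖₊ ∂(volume.restrict (Set.Ioc 0 Real.pi))
      ≤ ENNReal.ofReal c * ENNReal.ofReal Real.pi := by
  have hb : ∀ z, (‖f z‖₊ : ℝ≥0∞) ≤ ENNReal.ofReal c := by
    intro z
    rw [show ((‖f z‖₊ : ℝ≥0∞)) = ENNReal.ofReal ‖f z‖ from (ofReal_norm (f z)).symm, Real.norm_eq_abs]
    exact ENNReal.ofReal_le_ofReal (hf z)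
  calc ∫⁻ z, ‖f z‖₊ ∂(volume.restrict (Set.Ioc 0 Real.pi))
      ≤ ∫⁻ _, ENNReal.ofReal c ∂(volume.restrict (Set.Ioc 0 Real.pi)) :=
        lintegral_mono fun z => hb z
    _ = ENNReal.ofReal c * volume (Set.Ioc 0 Real.pi) := by
        rw [lintegral_const, Measure.restrict_apply_univ]
    _ = ENNReal.ofReal c * ENNReal.ofReal Real.pi := by
        rw [Real.volume_Ioc, sub_zero]

private lemma tsum_lint_ne_top {f : ℕ → ℝ → ℝ} {b : ℕ → ℝ} (hb0 : ∀ j, 0 ≤ b j)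
    (hb : Summable b) (hf : ∀ j z, |f j z| ≤ b j) :
    (∑' j, ∫⁻ z, ‖f j z‖₊ ∂(volume.restrict (Set.Ioc 0 Real.pi))) ≠ ⊤ := by
  have hle : (∑' j, ∫⁻ z, ‖f j z‖₊ ∂(volume.restrict (Set.Ioc 0 Real.pi)))
      ≤ ∑' j, ENNReal.ofReal (b j) * ENNReal.ofReal Real.pi :=
    ENNReal.tsum_le_tsum fun j => lint_bound (hf j)
  refine ne_top_of_le_ne_top ?_ hle
  rw [ENNReal.tsum_mul_right, ← ENNReal.ofReal_tsum_of_nonneg hb0 hb]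
  exact ENNReal.mul_ne_top ENNReal.ofReal_ne_top ENNReal.ofReal_ne_top

private lemma parseval (a : ℕ → ℝ) (ha : Summable fun j => |a j|) :
    ∫ z in (0:ℝ)..Real.pi, (∑' j : ℕ, a j * phi (j+1) z)^2 = ∑' j : ℕ, (a j)^2 := by
  set K := Real.sqrt (2 / Real.pi) with hKdef
  have hK0 : 0 ≤ K := Real.sqrt_nonneg _
  set M := ∑' j, |a j| with hMdef
  have hM0 : 0 ≤ M := tsum_nonneg fun j => abs_nonneg _
  set F := fun z => ∑' j : ℕ, a j * phi (j+1) z with hFdef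
  have hbound : ∀ (j : ℕ) (z : ℝ), ‖a j * phi (j+1) z‖ ≤ |a j| * K := by
    intro j z
    rw [Real.norm_eq_abs, abs_mul]
    exact mul_le_mul_of_nonneg_left (phi_abs_le _ _) (abs_nonneg _)
  have hsummand : ∀ z, Summable fun j => ‖a j * phi (j+1) z‖ :=
    fun z => (ha.mul_right K).of_nonneg_of_le (fun j => norm_nonneg _) (fun j => hbound j z)
  have hFc : Continuous F :=
    continuous_tsum (fun j => (continuous_const.mul (phi_cont (j+1)))) (ha.mul_right K)
      (fun j z => hbound j z)
  have hFb : ∀ z, |F z| ≤ M * K := by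
    intro z
    calc |F z| ≤ ∑' j, ‖a j * phi (j+1) z‖ := by
          rw [← Real.norm_eq_abs]; exact norm_tsum_le_tsum_norm (hsummand z)
      _ ≤ ∑' j, |a j| * K := Summable.tsum_le_tsum (fun j => hbound j z) (hsummand z) (ha.mul_right K)
      _ = M * K := tsum_mul_right
  have inner : ∀ j : ℕ, ∫ z in Set.Ioc (0:ℝ) Real.pi, phi (j+1) z * F z = a j := by
    intro j
    have hrw : (fun z => phi (j+1) z * F z)
        = fun z => ∑' k : ℕ, a k * (phi (j+1) z * phi (k+1) z) := by
      funext z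
      rw [hFdef]
      dsimp only
      rw [← tsum_mul_left]
      congr 1; funext k; ring
    rw [hrw, MeasureTheory.integral_tsum]
    · have hterm : ∀ k : ℕ, ∫ z in Set.Ioc (0:ℝ) Real.pi, a k * (phi (j+1) z * phi (k+1) z)
          = a k * if j = k then 1 else 0 := by
        intro k
        rw [MeasureTheory.integral_const_mul]
        congr 1
        rw [← intervalIntegral.integral_of_le Real.pi_nonneg]
        exact phi_ortho j k
      simp only [hterm]
      rw [tsum_eq_single j (fun k hk => by rw [if_neg (fun h => hk h.symm), mul_zero])]
      rw [if_pos rfl, mul_one]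
    · intro k
      exact (continuous_const.mul ((phi_cont (j+1)).mul (phi_cont (k+1)))).aestronglyMeasurable
    · apply tsum_lint_ne_top (b := fun k => |a k| * (K * K))
        (fun k => by positivity) (ha.mul_right _)
      intro k z
      rw [abs_mul, abs_mul]
      refine mul_le_mul_of_nonneg_left ?_ (abs_nonneg _)
      exact mul_le_mul (phi_abs_le _ _) (phi_abs_le _ _) (abs_nonneg _) hK0
  rw [intervalIntegral.integral_of_le Real.pi_nonneg]
  have hsq : (fun z => F z ^ 2) = fun z => ∑' j : ℕ, a j * phi (j+1) z * F z := by
    funext z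
    rw [pow_two, hFdef]
    dsimp only
    exact (tsum_mul_right).symm
  calc ∫ z in Set.Ioc (0:ℝ) Real.pi, F z ^ 2
      = ∫ z in Set.Ioc (0:ℝ) Real.pi, ∑' j : ℕ, a j * phi (j+1) z * F z := by rw [hsq]
    _ = ∑' j : ℕ, ∫ z in Set.Ioc (0:ℝ) Real.pi, a j * phi (j+1) z * F z := by
        apply MeasureTheory.integral_tsum
        · intro j
          exact (((continuous_const.mul (phi_cont (j+1)))).mul hFc).aestronglyMeasurable
        · apply tsum_lint_ne_top (b := fun j => |a j| * (K * (M * K)))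
            (fun j => by positivity) (ha.mul_right _)
          intro j z
          rw [abs_mul, abs_mul, mul_assoc]
          refine mul_le_mul_of_nonneg_left ?_ (abs_nonneg _)
          exact mul_le_mul (phi_abs_le _ _) (hFb z) (abs_nonneg _) hK0
    _ = ∑' j : ℕ, a j * ∫ z in Set.Ioc (0:ℝ) Real.pi, phi (j+1) z * F z := by
        congr 1; funext j
        rw [← MeasureTheory.integral_const_mul]
        congr 1; funext z; ring
    _ = ∑' j : ℕ, (a j)^2 := by
        congr 1; funext j; rw [inner j, pow_two]

private lemma integral_tsum_le {s : Set ℝ} {f : ℕ → ℝ → ℝ} {B : ℕ → ℝ}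
    (hmeas : ∀ j, AEStronglyMeasurable (f j) (volume.restrict s))
    (hnn : ∀ j r, 0 ≤ f j r)
    (hint : ∀ j, Integrable (f j) (volume.restrict s))
    (hB : Summable B) (hBle : ∀ j, ∫ r, f j r ∂(volume.restrict s) ≤ B j) :
    ∫ r, (∑' j, f j r) ∂(volume.restrict s) ≤ ∑' j, B j := by
  set μ := volume.restrict s
  have hB0 : ∀ j, 0 ≤ B j := fun j => le_trans (integral_nonneg (hnn j)) (hBle j)
  by_cases hI : Integrable (fun r => ∑' j, f j r) μ
  · rw [MeasureTheory.integral_eq_lintegral_of_nonneg_ae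
      (Filter.Eventually.of_forall fun r => tsum_nonneg fun j => hnn j r) hI.1]
    have key : (∫⁻ r, ENNReal.ofReal (∑' j, f j r) ∂μ) ≤ ENNReal.ofReal (∑' j, B j) := by
      calc (∫⁻ r, ENNReal.ofReal (∑' j, f j r) ∂μ)
          ≤ ∫⁻ r, ∑' j, ENNReal.ofReal (f j r) ∂μ := by
            apply lintegral_mono
            intro r
            show ENNReal.ofReal (∑' j, f j r) ≤ ∑' j, ENNReal.ofReal (f j r)
            by_cases hsum : Summable fun j => f j r
            · rw [ENNReal.ofReal_tsum_of_nonneg (fun j => hnn j r) hsum]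
            · rw [tsum_eq_zero_of_not_summable hsum]; simp
        _ = ∑' j, ∫⁻ r, ENNReal.ofReal (f j r) ∂μ :=
            lintegral_tsum fun j => (ENNReal.measurable_ofReal.comp_aemeasurable
              (hmeas j).aemeasurable)
        _ = ∑' j, ENNReal.ofReal (∫ r, f j r ∂μ) := by
            congr 1; funext j
            rw [MeasureTheory.ofReal_integral_eq_lintegral_ofReal (hint j)
              (Filter.Eventually.of_forall fun r => hnn j r)]
        _ ≤ ∑' j, ENNReal.ofReal (B j) :=
            ENNReal.tsum_le_tsum fun j => ENNReal.ofReal_le_ofReal (hBle j)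
        _ = ENNReal.ofReal (∑' j, B j) := (ENNReal.ofReal_tsum_of_nonneg hB0 hB).symm
    calc (∫⁻ r, ENNReal.ofReal (∑' j, f j r) ∂μ).toReal
        ≤ (ENNReal.ofReal (∑' j, B j)).toReal :=
          ENNReal.toReal_mono ENNReal.ofReal_ne_top key
      _ = ∑' j, B j := ENNReal.toReal_ofReal (tsum_nonneg hB0)
  · rw [MeasureTheory.integral_undef hI]
    exact tsum_nonneg hB0

private lemma int_exp_le {c t : ℝ} (hc : 0 < c) (ht : 0 ≤ t) :
    ∫ r in (0:ℝ)..t, Real.exp (-c * (t - r)) ≤ 1 / c := by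
  rw [intervalIntegral.integral_comp_sub_left (fun u => Real.exp (-c * u)) t]
  simp only [sub_self, sub_zero]
  have h1 : (fun u => Real.exp (-c * u)) = fun u => Real.exp (-(c * u)) := by
    funext u; ring_nf
  rw [h1, intervalIntegral.integral_comp_mul_left (fun v => Real.exp (-v)) hc.ne']
  have h2 : (∫ v in (c*0)..(c*t), Real.exp (-v)) = 1 - Real.exp (-(c*t)) := by
    rw [intervalIntegral.integral_comp_neg (fun w => Real.exp w), integral_exp]
    simp
  rw [h2, smul_eq_mul]
  have h3 : 1 - Real.exp (-(c*t)) ≤ 1 := by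
    have := (Real.exp_pos (-(c*t))).le; linarith
  calc c⁻¹ * (1 - Real.exp (-(c*t))) ≤ c⁻¹ * 1 :=
        mul_le_mul_of_nonneg_left h3 (inv_nonneg.mpr hc.le)
    _ = 1 / c := by rw [mul_one, one_div]

/-- There exists `C = C(T) > 0` such that for all `x, y ∈ [0,π]` and `t ∈ (0,T]`,
`∫_0^t ∫_0^π |G_{t−r}(x,z) − G_{t−r}(y,z)|² dz dr ≤ C|x−y|²`. -/
theorem stmt3 (T : ℝ) (hT : 0 < T) :
    ∃ C : ℝ, 0 < C ∧ ∀ x ∈ Set.Icc (0 : ℝ) Real.pi, ∀ y ∈ Set.Icc (0 : ℝ) Real.pi,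
      ∀ t ∈ Set.Ioc (0 : ℝ) T,
      (∫ r in (0 : ℝ)..t, ∫ z in (0 : ℝ)..Real.pi,
        |G (t - r) x z - G (t - r) y z| ^ 2) ≤ C * |x - y| ^ 2 := by
  have hpi := Real.pi_pos
  set K := Real.sqrt (2 / Real.pi) with hKdef
  have hK0 : 0 ≤ K := Real.sqrt_nonneg _
  have hSsum : Summable fun j : ℕ => 1 / ((j:ℝ)+1)^2 := by
    have h := Real.summable_one_div_nat_pow.mpr (by norm_num : 1 < 2)
    have h2 := (summable_nat_add_iff 1).mpr h
    refine h2.congr fun j => ?_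
    push_cast; ring_nf
  set S := ∑' j : ℕ, 1 / ((j:ℝ)+1)^2 with hSdef
  have hS0 : 0 ≤ S := tsum_nonneg fun j => by positivity
  refine ⟨S / Real.pi + 1, by positivity, ?_⟩
  intro x hx y hy t ht
  obtain ⟨ht0, htT⟩ := ht
  set d := fun j : ℕ => phi (j+1) x - phi (j+1) y with hddef
  set g := fun (j : ℕ) (r : ℝ) => Real.exp (-(2*((j:ℝ)+1)^4) * (t - r)) * (d j)^2 with hgdef
  set B := fun j : ℕ => (d j)^2 / (2*((j:ℝ)+1)^4) with hBdef
  have hinner : ∀ r ∈ Set.Ioo (0:ℝ) t,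
      (∫ z in (0:ℝ)..Real.pi, |G (t - r) x z - G (t - r) y z| ^ 2) = ∑' j, g j r := by
    intro r hr
    have hs : 0 < t - r := by linarith [hr.2]
    set a := fun j : ℕ => Real.exp (-((j:ℝ)+1)^4 * (t-r)) * d j with hadef
    have ha : Summable fun j => |a j| := by
      refine ((summable_exp4 hs).mul_right (2*K)).of_nonneg_of_le
        (fun j => abs_nonneg _) (fun j => ?_)
      rw [hadef]
      dsimp only
      rw [abs_mul, abs_of_nonneg (Real.exp_pos _).le]
      exact mul_le_mul_of_nonneg_left (phi_diff_le _ _ _) (Real.exp_pos _).le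
    have hGrw : (fun z => |G (t - r) x z - G (t - r) y z| ^ 2)
        = fun z => (∑' j : ℕ, a j * phi (j+1) z)^2 := by
      funext z
      rw [sq_abs, Gdiff_eq x y hs z]
    rw [hGrw, parseval a ha]
    congr 1; funext j
    rw [hadef, hgdef]
    dsimp only
    rw [mul_pow]
    congr 1
    rw [← Real.exp_nat_mul]
    congr 1
    push_cast; ring
  have houter : (∫ r in (0:ℝ)..t, ∫ z in (0:ℝ)..Real.pi, |G (t-r) x z - G (t-r) y z|^2)
      = ∫ r in Set.Ioo (0:ℝ) t, ∑' j, g j r := by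
    rw [intervalIntegral.integral_of_le ht0.le, MeasureTheory.integral_Ioc_eq_integral_Ioo]
    exact MeasureTheory.setIntegral_congr_fun measurableSet_Ioo hinner
  rw [houter]
  have hgc : ∀ j, Continuous (g j) := by
    intro j
    apply Continuous.mul _ continuous_const
    exact Real.continuous_exp.comp (continuous_const.mul (continuous_const.sub continuous_id))
  have hgint : ∀ j, Integrable (g j) (volume.restrict (Set.Ioo 0 t)) := fun j =>
    ((hgc j).integrableOn_Icc).mono_set Set.Ioo_subset_Icc_self
  have hBle : ∀ j, ∫ r, g j r ∂(volume.restrict (Set.Ioo 0 t)) ≤ B j := by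
    intro j
    have hc : (0:ℝ) < 2*((j:ℝ)+1)^4 := by positivity
    have heq : ∫ r, g j r ∂(volume.restrict (Set.Ioo 0 t))
        = (∫ r in (0:ℝ)..t, Real.exp (-(2*((j:ℝ)+1)^4)*(t-r))) * (d j)^2 := by
      rw [← intervalIntegral.integral_mul_const, intervalIntegral.integral_of_le ht0.le,
          MeasureTheory.integral_Ioc_eq_integral_Ioo]
    rw [heq, hBdef]
    calc (∫ r in (0:ℝ)..t, Real.exp (-(2*((j:ℝ)+1)^4)*(t-r))) * (d j)^2
        ≤ (1/(2*((j:ℝ)+1)^4)) * (d j)^2 :=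
          mul_le_mul_of_nonneg_right (int_exp_le hc ht0.le) (sq_nonneg _)
      _ = (d j)^2 / (2*((j:ℝ)+1)^4) := by ring
  have hdle : ∀ j, B j ≤ 1/((j:ℝ)+1)^2 * (|x-y|^2 / Real.pi) := by
    intro j
    have hlip := phi_lip (j+1) x y
    have hd2 : (d j)^2 ≤ K^2 * (((j:ℝ)+1))^2 * |x-y|^2 := by
      have h1 : (d j)^2 = |d j|^2 := (sq_abs _).symm
      rw [h1]
      calc |d j|^2 ≤ (K * ((j+1:ℕ):ℝ) * |x-y|)^2 := by
            apply pow_le_pow_left₀ (abs_nonneg _) hlip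
        _ = K^2 * (((j:ℝ)+1))^2 * |x-y|^2 := by push_cast; ring
    rw [hBdef]
    dsimp only
    have hc4 : (0:ℝ) < 2*((j:ℝ)+1)^4 := by positivity
    rw [div_le_iff₀ hc4]
    calc (d j)^2 ≤ K^2 * (((j:ℝ)+1))^2 * |x-y|^2 := hd2
        _ = (2/Real.pi) * (((j:ℝ)+1))^2 * |x-y|^2 := by rw [sqK]
        _ = 1/((j:ℝ)+1)^2 * (|x-y|^2/Real.pi) * (2*((j:ℝ)+1)^4) := by
            have hj : ((j:ℝ)+1) ≠ 0 := by positivity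
            field_simp
  have hRsum : Summable fun j : ℕ => 1/((j:ℝ)+1)^2 * (|x-y|^2 / Real.pi) :=
    hSsum.mul_right _
  have hBsum : Summable B :=
    hRsum.of_nonneg_of_le (fun j => by rw [hBdef]; positivity) hdle
  calc ∫ r in Set.Ioo (0:ℝ) t, ∑' j, g j r
      ≤ ∑' j, B j := by
        apply integral_tsum_le (fun j => (hgc j).aestronglyMeasurable.restrict)
          (fun j r => mul_nonneg (Real.exp_pos _).le (sq_nonneg _)) hgint hBsum hBle
    _ ≤ ∑' j : ℕ, 1/((j:ℝ)+1)^2 * (|x-y|^2 / Real.pi) := Summable.tsum_le_tsum hdle hBsum hRsum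
    _ = S * (|x-y|^2 / Real.pi) := tsum_mul_right
    _ = (S / Real.pi) * |x-y|^2 := by field_simp
    _ ≤ (S / Real.pi + 1) * |x-y|^2 := by
        have hxy : (0:ℝ) ≤ |x-y|^2 := sq_nonneg _
        nlinarith
end

section
/- For every ρ ∈ (5/4, 2) there exists a constant C = C(ρ,T) > 0 such that for all x ∈ [0,π] and all 0 ≤ s < t ≤ T, ∫_s^t ∫_0^π |ΔG_{t−r}(x,z)| dz dr ≤ C (t−s)^{1−ρ/2}. -/
/-- `ΔG_t(x,y) = Σ_{j=1}^∞ (−j²) e^{−j⁴t} φ_j(x) φ_j(y)`, the Laplacian (in the first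
spatial variable) of the Green function of `∂_t + Δ²` on `(0,π)` with DBCs. -/
noncomputable def DG (t x y : ℝ) : ℝ :=
  ∑' j : ℕ, -(((j : ℝ) + 1) ^ 2) * Real.exp (-((j : ℝ) + 1) ^ 4 * t)
    * phi (j + 1) x * phi (j + 1) y


open MeasureTheory Set

namespace Stmt6Aux


lemma phi_cont (j : ℕ) : Continuous (phi j) := by
  unfold phi
  exact continuous_const.mul (Real.continuous_sin.comp (continuous_const.mul continuous_id))

lemma phi_abs_le (j : ℕ) (x : ℝ) : |phi j x| ≤ Real.sqrt (2 / Real.pi) := by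
  unfold phi
  rw [abs_mul, abs_of_nonneg (Real.sqrt_nonneg _)]
  have h1 : |Real.sin ((j:ℝ) * x)| ≤ 1 :=
    abs_le.mpr ⟨Real.neg_one_le_sin _, Real.sin_le_one _⟩
  nlinarith [Real.sqrt_nonneg (2/Real.pi), abs_nonneg (Real.sin ((j:ℝ)*x))]

lemma phi_sq_le (j : ℕ) (x : ℝ) : (phi j x) ^ 2 ≤ 2 / Real.pi := by
  have h := phi_abs_le j x
  rw [← sq_abs]
  calc |phi j x|^2 ≤ Real.sqrt (2/Real.pi)^2 :=
        pow_le_pow_left₀ (abs_nonneg _) h 2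
    _ = 2/Real.pi := Real.sq_sqrt (by positivity)

lemma integral_cos_int (n : ℤ) :
    ∫ z in (0:ℝ)..Real.pi, Real.cos (n * z) = if n = 0 then Real.pi else 0 := by
  by_cases h : n = 0
  · simp [h]
  · have hc : (n : ℝ) ≠ 0 := Int.cast_ne_zero.mpr h
    rw [if_neg h]
    rw [intervalIntegral.integral_comp_mul_left (fun y => Real.cos y) hc]
    simp [Real.sin_int_mul_pi]

lemma ortho {a b : ℕ} (ha : 1 ≤ a) (hb : 1 ≤ b) :
    ∫ z in (0:ℝ)..Real.pi, phi a z * phi b z = if a = b then 1 else 0 := by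
  have hpi := Real.pi_pos
  set m : ℤ := (a:ℤ) - (b:ℤ) with hm
  set p : ℤ := (a:ℤ) + (b:ℤ) with hp
  have key : ∀ z : ℝ, phi a z * phi b z
      = (1/Real.pi) * (Real.cos ((m:ℝ) * z) - Real.cos ((p:ℝ) * z)) := by
    intro z
    unfold phi
    have hs : Real.sqrt (2/Real.pi) * Real.sqrt (2/Real.pi) = 2/Real.pi :=
      Real.mul_self_sqrt (by positivity)
    have h1 : (m:ℝ) * z = (a:ℝ)*z - (b:ℝ)*z := by rw [hm]; push_cast; ring
    have h2 : (p:ℝ) * z = (a:ℝ)*z + (b:ℝ)*z := by rw [hp]; push_cast; ring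
    rw [h1, h2, Real.cos_sub, Real.cos_add]
    linear_combination (Real.sin ((a:ℝ)*z) * Real.sin ((b:ℝ)*z)) * hs
  rw [intervalIntegral.integral_congr (g := fun z => (1/Real.pi) *
      (Real.cos ((m:ℝ) * z) - Real.cos ((p:ℝ) * z))) (fun z _ => key z)]
  have c1 : Continuous fun z : ℝ => Real.cos ((m:ℝ) * z) :=
    Real.continuous_cos.comp (continuous_const.mul continuous_id)
  have c2 : Continuous fun z : ℝ => Real.cos ((p:ℝ) * z) :=
    Real.continuous_cos.comp (continuous_const.mul continuous_id)
  rw [intervalIntegral.integral_const_mul,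
    intervalIntegral.integral_sub (c1.intervalIntegrable _ _) (c2.intervalIntegrable _ _),
    integral_cos_int, integral_cos_int]
  have hab : p ≠ 0 := by omega
  rw [if_neg hab]
  by_cases h : a = b
  · have : m = 0 := by omega
    rw [if_pos this, if_pos h]
    field_simp
    ring
  · have : m ≠ 0 := by omega
    rw [if_neg this, if_neg h]
    ring



/-- `a^ρ e^{-a} ≤ 4` for `0 < a`, `0 ≤ ρ ≤ 2`. -/
lemma rpow_mul_exp_le {a ρ : ℝ} (ha : 0 < a) (hρ0 : 0 ≤ ρ) (hρ2 : ρ ≤ 2) :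
    a ^ ρ * Real.exp (-a) ≤ 4 := by
  rcases le_total a 1 with h | h
  · have h1 : a ^ ρ ≤ 1 := Real.rpow_le_one ha.le h hρ0
    have h2 : Real.exp (-a) ≤ 1 := Real.exp_le_one_iff.mpr (by linarith)
    nlinarith [Real.exp_pos (-a), Real.rpow_nonneg ha.le ρ]
  · have h1 : a ^ ρ ≤ a ^ (2:ℝ) := Real.rpow_le_rpow_of_exponent_le h hρ2
    have h2 : a ^ (2:ℝ) = a ^ 2 := by
      rw [show ((2:ℝ)) = ((2:ℕ):ℝ) by norm_num, Real.rpow_natCast]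
    have h3 : a ^ 2 ≤ 4 * Real.exp a := by
      have h4 := Real.add_one_le_exp (a/2)
      have hx : Real.exp (a/2) * Real.exp (a/2) = Real.exp a := by
        rw [← Real.exp_add]; ring_nf
      nlinarith [Real.exp_pos (a/2)]
    have h5 : Real.exp (-a) = (Real.exp a)⁻¹ := Real.exp_neg a
    have hea := Real.exp_pos a
    rw [h5]
    rw [h2] at h1
    calc a ^ ρ * (Real.exp a)⁻¹ ≤ (4 * Real.exp a) * (Real.exp a)⁻¹ := by
          apply mul_le_mul_of_nonneg_right (by linarith) (by positivity)
      _ = 4 := by field_simp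

/-- hence `e^{-a} ≤ 4 a^{-ρ}`. -/
lemma exp_le_rpow {a ρ : ℝ} (ha : 0 < a) (hρ0 : 0 ≤ ρ) (hρ2 : ρ ≤ 2) :
    Real.exp (-a) ≤ 4 * a ^ (-ρ) := by
  have h := rpow_mul_exp_le ha hρ0 hρ2
  have hpos : (0:ℝ) < a ^ ρ := Real.rpow_pos_of_pos ha ρ
  have hneg : a ^ (-ρ) = (a ^ ρ)⁻¹ := Real.rpow_neg ha.le ρ
  rw [hneg]
  rw [← le_div_iff₀' hpos] at h
  calc Real.exp (-a) ≤ 4 / a ^ ρ := h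
    _ = 4 * (a ^ ρ)⁻¹ := by ring

/-- summability of `m² e^{-m⁴ u}`, `m = j+1`. -/
lemma summable_c {u : ℝ} (hu : 0 < u) :
    Summable (fun j : ℕ => ((j:ℝ)+1)^2 * Real.exp (-((j:ℝ)+1)^4 * u)) := by
  set r : ℝ := Real.exp (-u) with hr
  have hr0 : 0 < r := Real.exp_pos _
  have hr1 : r < 1 := Real.exp_lt_one_iff.mpr (by linarith)
  have hgeom : Summable (fun n : ℕ => (n:ℝ)^2 * r^n) := by
    have := summable_pow_mul_geometric_of_norm_lt_one (R := ℝ) 2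
      (r := r) (by rw [Real.norm_eq_abs, abs_of_pos hr0]; exact hr1)
    exact this
  have hshift : Summable (fun j : ℕ => (((j+1:ℕ)):ℝ)^2 * r^(j+1)) :=
    (summable_nat_add_iff (f := fun n : ℕ => (n:ℝ)^2 * r^n) 1).mpr hgeom
  refine Summable.of_nonneg_of_le (fun j => by positivity) (fun j => ?_) hshift
  have hm : (1:ℝ) ≤ (j:ℝ)+1 := by linarith [Nat.cast_nonneg (α := ℝ) j]
  have hm4 : (j:ℝ)+1 ≤ ((j:ℝ)+1)^4 := le_self_pow₀ hm (by norm_num)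
  have hexp : Real.exp (-((j:ℝ)+1)^4 * u) ≤ r^(j+1) := by
    have hrr : r^(j+1) = Real.exp ((((j+1:ℕ)):ℝ) * (-u)) := by
      rw [Real.exp_nat_mul]
    rw [hrr]
    apply Real.exp_le_exp.mpr
    push_cast
    nlinarith [mul_le_mul_of_nonneg_right hm4 hu.le]
  have hcast : ((j+1:ℕ):ℝ) = (j:ℝ)+1 := by push_cast; ring
  rw [hcast]
  have h0 : (0:ℝ) ≤ ((j:ℝ)+1)^2 := by positivity
  exact mul_le_mul_of_nonneg_left hexp h0

/-- summability of the rpow tail series. -/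
lemma summable_E {q : ℝ} (hq : q < -1) :
    Summable (fun j : ℕ => ((j:ℝ)+1) ^ q) := by
  have h := Real.summable_nat_rpow (p := q) |>.mpr hq
  have h2 : Summable (fun j : ℕ => ((j+1:ℕ):ℝ) ^ q) := (summable_nat_add_iff 1).mpr h
  apply h2.congr
  intro j
  congr 1
  push_cast; ring

lemma spatial {ρ : ℝ} (hρ : ρ ∈ Set.Ioo (5/4 : ℝ) 2) :
    ∃ A : ℝ, 0 < A ∧ ∀ u : ℝ, 0 < u → ∀ x : ℝ,
      (∫ z in (0:ℝ)..Real.pi, |DG u x z|) ≤ A * u ^ (-(ρ/2)) := by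
  obtain ⟨hρ1, hρ2⟩ := hρ
  have hρ0 : (0:ℝ) ≤ ρ := by linarith
  have hpi := Real.pi_pos
  have hq : 4 - 4*ρ < -1 := by linarith
  have hE : Summable (fun j : ℕ => ((j:ℝ)+1) ^ (4-4*ρ)) := summable_E hq
  set Ksum : ℝ := ∑' j : ℕ, ((j:ℝ)+1) ^ (4-4*ρ) with hKsum
  have hKsum_pos : 0 < Ksum := by
    have h0 : (0:ℝ) < (((0:ℕ):ℝ)+1) ^ (4-4*ρ) := Real.rpow_pos_of_pos (by norm_num) _
    have hle : (((0:ℕ):ℝ)+1) ^ (4-4*ρ) ≤ Ksum :=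
      Summable.le_tsum hE 0 (fun j _ => Real.rpow_nonneg (by positivity) _)
    linarith
  have h2ρ : (0:ℝ) < (2:ℝ) ^ (-ρ) := Real.rpow_pos_of_pos (by norm_num) _
  set K : ℝ := 8 * (2:ℝ) ^ (-ρ) * Ksum with hK
  have hKpos : 0 < K := by positivity
  refine ⟨Real.sqrt K, Real.sqrt_pos.mpr hKpos, ?_⟩
  intro u hu x
  -- coefficients
  set c : ℕ → ℝ := fun j => ((j:ℝ)+1)^2 * Real.exp (-((j:ℝ)+1)^4 * u) with hc
  set d : ℕ → ℝ := fun j => -(c j) * phi (j+1) x with hd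
  have hc_pos : ∀ j, 0 < c j := fun j => by rw [hc]; positivity
  have hc_sum : Summable c := summable_c hu
  have hd_abs : ∀ j, |d j| ≤ Real.sqrt (2/Real.pi) * c j := by
    intro j
    rw [hd]
    simp only
    rw [abs_mul, abs_neg, abs_of_pos (hc_pos j)]
    calc c j * |phi (j+1) x| ≤ c j * Real.sqrt (2/Real.pi) :=
          mul_le_mul_of_nonneg_left (phi_abs_le _ _) (hc_pos j).le
      _ = _ := mul_comm _ _
  have hd_abs_sum : Summable (fun j => |d j|) :=
    Summable.of_nonneg_of_le (fun j => abs_nonneg _) hd_abs (hc_sum.mul_left _)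
  set S : ℝ → ℝ := fun z => ∑' j, d j * phi (j+1) z with hS
  have hSz : ∀ z, S z = ∑' j, d j * phi (j+1) z := fun z => rfl
  have hDG : ∀ z, DG u x z = S z := by
    intro z
    rw [hSz]
    unfold DG
    refine tsum_congr fun j => ?_
    rw [hd, hc]
    simp only
    ring
  have hbound : ∀ j z, ‖d j * phi (j+1) z‖ ≤ |d j| * Real.sqrt (2/Real.pi) := by
    intro j z
    rw [Real.norm_eq_abs, abs_mul]
    exact mul_le_mul_of_nonneg_left (phi_abs_le _ _) (abs_nonneg _)
  have hbound_sum : Summable (fun j => |d j| * Real.sqrt (2/Real.pi)) := hd_abs_sum.mul_right _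
  have hScont : Continuous S := by
    rw [hS]
    exact continuous_tsum (fun j => continuous_const.mul (phi_cont (j+1))) hbound_sum
      (fun j z => hbound j z)
  set M : ℝ := ∑' j, |d j| * Real.sqrt (2/Real.pi) with hM
  have hSM : ∀ z, |S z| ≤ M := by
    intro z
    rw [hSz, hM]
    have hnsum : Summable (fun j => ‖d j * phi (j+1) z‖) :=
      Summable.of_nonneg_of_le (fun j => norm_nonneg _) (fun j => hbound j z) hbound_sum
    calc |∑' j, d j * phi (j+1) z| ≤ ∑' j, ‖d j * phi (j+1) z‖ := by
          rw [← Real.norm_eq_abs]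
          exact norm_tsum_le_tsum_norm hnsum
      _ ≤ ∑' j, |d j| * Real.sqrt (2/Real.pi) :=
          Summable.tsum_le_tsum (fun j => hbound j z) hnsum hbound_sum
  have hM0 : 0 ≤ M := le_trans (abs_nonneg _) (hSM 0)
  -- integrability helper
  have hInt : ∀ f : ℝ → ℝ, Continuous f → IntegrableOn f (Ioc (0:ℝ) Real.pi) volume := by
    intro f hf
    exact (hf.integrableOn_Icc).mono_set Ioc_subset_Icc_self
  have hμπ : (volume (Ioc (0:ℝ) Real.pi)).toReal = Real.pi := by
    simp [Real.volume_Ioc, ENNReal.toReal_ofReal hpi.le]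
  have hμfin : volume (Ioc (0:ℝ) Real.pi) < ⊤ := by
    rw [Real.volume_Ioc]; exact ENNReal.ofReal_lt_top
  have int_norm_le : ∀ (f : ℝ → ℝ) (Cb : ℝ), Continuous f → (∀ z, |f z| ≤ Cb) →
      (∫ z in Ioc (0:ℝ) Real.pi, ‖f z‖) ≤ Cb * Real.pi := by
    intro f Cb hf hfb
    calc (∫ z in Ioc (0:ℝ) Real.pi, ‖f z‖)
        ≤ ∫ _z in Ioc (0:ℝ) Real.pi, Cb :=
          setIntegral_mono_on ((hInt f hf).norm) (integrableOn_const hμfin.ne)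
            measurableSet_Ioc (fun z _ => hfb z)
      _ = Cb * Real.pi := by rw [setIntegral_const, measureReal_def, hμπ, smul_eq_mul, mul_comm]
  have orthoμ : ∀ a b : ℕ, (∫ z in Ioc (0:ℝ) Real.pi, phi (a+1) z * phi (b+1) z)
      = if a = b then 1 else 0 := by
    intro a b
    rw [← intervalIntegral.integral_of_le hpi.le]
    rw [ortho (by omega) (by omega)]
    simp
  -- inner expansion
  have inner : ∀ j : ℕ, (∫ z in Ioc (0:ℝ) Real.pi, phi (j+1) z * S z) = d j := by
    intro j
    have expand : ∀ z, phi (j+1) z * S z = ∑' k, phi (j+1) z * (d k * phi (k+1) z) := by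
      intro z; rw [hSz]; exact (tsum_mul_left).symm
    have hGcont : ∀ k : ℕ, Continuous (fun z => phi (j+1) z * (d k * phi (k+1) z)) :=
      fun k => (phi_cont _).mul (continuous_const.mul (phi_cont _))
    have hGb : ∀ k z, |phi (j+1) z * (d k * phi (k+1) z)|
        ≤ |d k| * (Real.sqrt (2/Real.pi) * Real.sqrt (2/Real.pi)) := by
      intro k z
      rw [abs_mul, abs_mul]
      calc |phi (j+1) z| * (|d k| * |phi (k+1) z|)
          ≤ Real.sqrt (2/Real.pi) * (|d k| * Real.sqrt (2/Real.pi)) := by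
            apply mul_le_mul (phi_abs_le _ _)
              (mul_le_mul_of_nonneg_left (phi_abs_le _ _) (abs_nonneg _))
              (by positivity) (Real.sqrt_nonneg _)
        _ = |d k| * (Real.sqrt (2/Real.pi) * Real.sqrt (2/Real.pi)) := by ring
    have hGint : ∀ k : ℕ, Integrable (fun z => phi (j+1) z * (d k * phi (k+1) z))
        (volume.restrict (Ioc (0:ℝ) Real.pi)) := fun k => hInt _ (hGcont k)
    have hGsum : Summable (fun k => ∫ z in Ioc (0:ℝ) Real.pi,
        ‖phi (j+1) z * (d k * phi (k+1) z)‖) := by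
      refine Summable.of_nonneg_of_le
        (fun k => integral_nonneg fun z => norm_nonneg _)
        (fun k => int_norm_le _ _ (hGcont k) (hGb k)) ?_
      exact (hd_abs_sum.mul_right _).mul_right _
    calc (∫ z in Ioc (0:ℝ) Real.pi, phi (j+1) z * S z)
        = ∫ z in Ioc (0:ℝ) Real.pi, ∑' k, phi (j+1) z * (d k * phi (k+1) z) := by
          simp_rw [expand]
      _ = ∑' k, ∫ z in Ioc (0:ℝ) Real.pi, phi (j+1) z * (d k * phi (k+1) z) :=
          (integral_tsum_of_summable_integral_norm hGint hGsum).symm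
      _ = ∑' k, (if k = j then d j else 0) := by
          refine tsum_congr fun k => ?_
          have hre : ∀ z, phi (j+1) z * (d k * phi (k+1) z)
              = d k * (phi (j+1) z * phi (k+1) z) := fun z => by ring
          simp_rw [hre]
          rw [integral_const_mul, orthoμ j k]
          by_cases h : k = j
          · subst h; simp
          · simp [h, Ne.symm h]
      _ = d j := by exact tsum_ite_eq j (fun _ => d j)
  -- L² identity
  have hsq : (∫ z in Ioc (0:ℝ) Real.pi, (S z)^2) = ∑' j, d j * d j := by
    have expand : ∀ z, (S z)^2 = ∑' j, (d j * phi (j+1) z) * S z := by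
      intro z
      rw [sq, tsum_mul_right, ← hSz z]
    have hFcont : ∀ j : ℕ, Continuous (fun z => (d j * phi (j+1) z) * S z) :=
      fun j => ((continuous_const.mul (phi_cont _)).mul hScont)
    have hFb : ∀ j z, |(d j * phi (j+1) z) * S z|
        ≤ |d j| * (Real.sqrt (2/Real.pi) * M) := by
      intro j z
      rw [abs_mul, abs_mul]
      calc |d j| * |phi (j+1) z| * |S z|
          ≤ |d j| * Real.sqrt (2/Real.pi) * M := by
            apply mul_le_mul (mul_le_mul_of_nonneg_left (phi_abs_le _ _) (abs_nonneg _))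
              (hSM z) (abs_nonneg _) (by positivity)
        _ = |d j| * (Real.sqrt (2/Real.pi) * M) := by ring
    have hFint : ∀ j : ℕ, Integrable (fun z => (d j * phi (j+1) z) * S z)
        (volume.restrict (Ioc (0:ℝ) Real.pi)) := fun j => hInt _ (hFcont j)
    have hFsum : Summable (fun j => ∫ z in Ioc (0:ℝ) Real.pi,
        ‖(d j * phi (j+1) z) * S z‖) := by
      refine Summable.of_nonneg_of_le
        (fun j => integral_nonneg fun z => norm_nonneg _)
        (fun j => int_norm_le _ _ (hFcont j) (hFb j)) ?_
      exact (hd_abs_sum.mul_right _).mul_right _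
    calc (∫ z in Ioc (0:ℝ) Real.pi, (S z)^2)
        = ∫ z in Ioc (0:ℝ) Real.pi, ∑' j, (d j * phi (j+1) z) * S z := by
          simp_rw [expand]
      _ = ∑' j, ∫ z in Ioc (0:ℝ) Real.pi, (d j * phi (j+1) z) * S z :=
          (integral_tsum_of_summable_integral_norm hFint hFsum).symm
      _ = ∑' j, d j * d j := by
          refine tsum_congr fun j => ?_
          have hre : ∀ z, (d j * phi (j+1) z) * S z
              = d j * (phi (j+1) z * S z) := fun z => by ring
          simp_rw [hre]
          rw [integral_const_mul, inner j]
  -- coefficient bound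
  have hEb : ∀ j : ℕ, (c j)^2
      ≤ 4 * (2:ℝ)^(-ρ) * u^(-ρ) * ((j:ℝ)+1)^(4-4*ρ) := by
    intro j
    set w : ℝ := (j:ℝ)+1 with hw
    have hw0 : (0:ℝ) < w := by rw [hw]; positivity
    have ha : (0:ℝ) < 2 * w^4 * u := by positivity
    have hexp : Real.exp (-(2 * w^4 * u)) ≤ 4 * (2 * w^4 * u) ^ (-ρ) :=
      exp_le_rpow ha hρ0 hρ2.le
    have hcsq : (c j)^2 = w^4 * Real.exp (-(2*w^4*u)) := by
      rw [hc]
      simp only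
      calc (w^2 * Real.exp (-w^4*u))^2
          = w^4 * (Real.exp (-w^4*u) * Real.exp (-w^4*u)) := by ring
        _ = w^4 * Real.exp ((-w^4*u) + (-w^4*u)) := by rw [← Real.exp_add]
        _ = w^4 * Real.exp (-(2*w^4*u)) := by ring_nf
    have hrpow : (2 * w^4 * u) ^ (-ρ) = (2:ℝ)^(-ρ) * (w^4:ℝ)^(-ρ) * u^(-ρ) := by
      rw [Real.mul_rpow (by positivity) hu.le, Real.mul_rpow (by norm_num) (by positivity)]
    have hw4 : (w^4:ℝ)^(-ρ) = w ^ ((4:ℝ) * (-ρ)) := by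
      rw [← Real.rpow_natCast w 4, ← Real.rpow_mul hw0.le]
      norm_num
    have hw44 : w^4 * w ^ ((4:ℝ)*(-ρ)) = w ^ (4-4*ρ) := by
      rw [← Real.rpow_natCast w 4, ← Real.rpow_add hw0]
      norm_num
      ring_nf
    calc (c j)^2 = w^4 * Real.exp (-(2*w^4*u)) := hcsq
      _ ≤ w^4 * (4 * (2 * w^4 * u) ^ (-ρ)) :=
          mul_le_mul_of_nonneg_left hexp (by positivity)
      _ = 4 * (2:ℝ)^(-ρ) * u^(-ρ) * (w^4 * w ^ ((4:ℝ)*(-ρ))) := by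
          rw [hrpow, hw4]; ring
      _ = 4 * (2:ℝ)^(-ρ) * u^(-ρ) * w ^ (4-4*ρ) := by rw [hw44]
  have hdd_le : ∀ j : ℕ, d j * d j
      ≤ (8/Real.pi) * (2:ℝ)^(-ρ) * u^(-ρ) * ((j:ℝ)+1)^(4-4*ρ) := by
    intro j
    have h1 : d j * d j = (c j)^2 * (phi (j+1) x)^2 := by rw [hd]; simp only; ring
    have hu0 : (0:ℝ) < u^(-ρ) := Real.rpow_pos_of_pos hu _
    calc d j * d j = (c j)^2 * (phi (j+1) x)^2 := h1
      _ ≤ (c j)^2 * (2/Real.pi) :=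
          mul_le_mul_of_nonneg_left (phi_sq_le _ _) (sq_nonneg _)
      _ ≤ (4 * (2:ℝ)^(-ρ) * u^(-ρ) * ((j:ℝ)+1)^(4-4*ρ)) * (2/Real.pi) := by
          apply mul_le_mul_of_nonneg_right (hEb j) (by positivity)
      _ = (8/Real.pi) * (2:ℝ)^(-ρ) * u^(-ρ) * ((j:ℝ)+1)^(4-4*ρ) := by ring
  have hdd_sum : Summable (fun j => d j * d j) :=
    Summable.of_nonneg_of_le (fun j => mul_self_nonneg _) hdd_le (hE.mul_left _)
  have hsum_le : ∑' j, d j * d j ≤ (K/Real.pi) * u^(-ρ) := by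
    calc ∑' j, d j * d j
        ≤ ∑' j : ℕ, (8/Real.pi) * (2:ℝ)^(-ρ) * u^(-ρ) * ((j:ℝ)+1)^(4-4*ρ) :=
          Summable.tsum_le_tsum hdd_le hdd_sum (hE.mul_left _)
      _ = (8/Real.pi) * (2:ℝ)^(-ρ) * u^(-ρ) * Ksum := by
          rw [hKsum]; exact tsum_mul_left
      _ = (K/Real.pi) * u^(-ρ) := by rw [hK]; ring
  -- AM-GM
  set v : ℝ := u ^ (-(ρ/2)) with hv
  have hv0 : 0 < v := Real.rpow_pos_of_pos hu _
  have hvv : v * v = u ^ (-ρ) := by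
    rw [hv, ← Real.rpow_add hu]
    congr 1
    ring
  set sk : ℝ := Real.sqrt K with hsk
  have hsk0 : 0 < sk := Real.sqrt_pos.mpr hKpos
  have hskk : sk * sk = K := Real.mul_self_sqrt hKpos.le
  set lam : ℝ := sk * v / Real.pi with hlam
  have hlam0 : 0 < lam := by positivity
  have hpt : ∀ z, |S z| ≤ (S z)^2 / (2*lam) + lam/2 := by
    intro z
    have h2 : 2*lam*|S z| ≤ (S z)^2 + lam^2 := by
      nlinarith [sq_nonneg (|S z| - lam), sq_abs (S z)]
    calc |S z| = (2*lam*|S z|)/(2*lam) := by field_simp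
      _ ≤ ((S z)^2 + lam^2)/(2*lam) := by gcongr
      _ = (S z)^2/(2*lam) + lam/2 := by field_simp
  have hint1 : (∫ z in Ioc (0:ℝ) Real.pi, |S z|)
      ≤ (∫ z in Ioc (0:ℝ) Real.pi, ((S z)^2/(2*lam) + lam/2)) := by
    apply setIntegral_mono_on (hInt _ hScont.abs)
      (hInt _ (((hScont.pow 2).div_const _).add continuous_const)) measurableSet_Ioc
    exact fun z _ => hpt z
  have hint2 : (∫ z in Ioc (0:ℝ) Real.pi, ((S z)^2/(2*lam) + lam/2))
      = (∫ z in Ioc (0:ℝ) Real.pi, (S z)^2)/(2*lam) + lam/2 * Real.pi := by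
    rw [integral_add ((hInt (fun z => (S z)^2) (hScont.pow 2)).div_const _)
      (integrableOn_const hμfin.ne)]
    rw [integral_div, setIntegral_const, measureReal_def, hμπ, smul_eq_mul]
    ring
  have hfinal : (∫ z in Ioc (0:ℝ) Real.pi, |S z|) ≤ sk * v := by
    have hsqle : (∫ z in Ioc (0:ℝ) Real.pi, (S z)^2) ≤ (K/Real.pi) * u^(-ρ) :=
      hsq ▸ hsum_le
    have h3 : (∫ z in Ioc (0:ℝ) Real.pi, (S z)^2)/(2*lam) + lam/2 * Real.pi
        ≤ ((K/Real.pi) * u^(-ρ))/(2*lam) + lam/2 * Real.pi := by gcongr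
    have h4 : ((K/Real.pi) * u^(-ρ))/(2*lam) + lam/2 * Real.pi = sk * v := by
      rw [← hvv, ← hskk, hlam]
      field_simp
      ring
    linarith [hint1, hint2 ▸ hint1, h3]
  -- conclude
  have hconv : (∫ z in (0:ℝ)..Real.pi, |DG u x z|) = ∫ z in Ioc (0:ℝ) Real.pi, |S z| := by
    rw [intervalIntegral.integral_of_le hpi.le]
    refine integral_congr_ae (Filter.Eventually.of_forall fun z => ?_)
    simp only [hDG z]
  rw [hconv]
  calc (∫ z in Ioc (0:ℝ) Real.pi, |S z|) ≤ sk * v := hfinal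
    _ = Real.sqrt K * u ^ (-(ρ/2)) := by rw [hsk, hv]


end Stmt6Aux

/-- For every `ρ ∈ (5/4, 2)` there is `C = C(ρ,T) > 0` such that for all `x ∈ [0,π]`
and `0 ≤ s < t ≤ T`, `∫_s^t ∫_0^π |ΔG_{t−r}(x,z)| dz dr ≤ C(t−s)^{1−ρ/2}`. -/
theorem stmt6 (T : ℝ) (hT : 0 < T) (ρ : ℝ) (hρ : ρ ∈ Set.Ioo (5 / 4 : ℝ) 2) :
    ∃ C : ℝ, 0 < C ∧ ∀ x ∈ Set.Icc (0 : ℝ) Real.pi, ∀ s t : ℝ, 0 ≤ s → s < t → t ≤ T →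
      (∫ r in s..t, ∫ z in (0 : ℝ)..Real.pi, |DG (t - r) x z|)
        ≤ C * (t - s) ^ (1 - ρ / 2) := by
  obtain ⟨A, hA, hAs⟩ := Stmt6Aux.spatial hρ
  obtain ⟨hρ1, hρ2⟩ := hρ
  have hexp : (0:ℝ) < 1 - ρ/2 := by linarith
  refine ⟨A / (1 - ρ/2), by positivity, ?_⟩
  intro x hx s t hs hst hT'
  have hts : 0 < t - s := by linarith
  have hrpos : (0:ℝ) < (t - s) ^ (1 - ρ/2) := Real.rpow_pos_of_pos hts _
  set I : ℝ → ℝ := fun r => ∫ z in (0:ℝ)..Real.pi, |DG (t - r) x z| with hI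
  by_cases hint : IntervalIntegrable I volume s t
  · have hbase : IntervalIntegrable (fun y : ℝ => y ^ (-(ρ/2))) volume (t - s) (t - t) :=
      intervalIntegral.intervalIntegrable_rpow' (by linarith)
    have hrhsInt : IntervalIntegrable (fun r => A * (t - r) ^ (-(ρ/2))) volume s t := by
      have h1 : IntervalIntegrable (fun r : ℝ => (t - r) ^ (-(ρ/2))) volume
          (t - (t-s)) (t - (t-t)) := hbase.comp_sub_left t
      have h2 : t - (t - s) = s := by ring
      have h3 : t - (t - t) = t := by ring
      rw [h2, h3] at h1
      exact h1.const_mul A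
    have hmono : (∫ r in s..t, I r) ≤ ∫ r in s..t, A * (t - r) ^ (-(ρ/2)) := by
      rw [intervalIntegral.integral_of_le hst.le, intervalIntegral.integral_of_le hst.le,
        integral_Ioc_eq_integral_Ioo, integral_Ioc_eq_integral_Ioo]
      apply setIntegral_mono_on
      · exact hint.1.mono_set Ioo_subset_Ioc_self
      · exact hrhsInt.1.mono_set Ioo_subset_Ioc_self
      · exact measurableSet_Ioo
      · intro r hr
        have hur : 0 < t - r := by linarith [hr.2]
        exact hAs (t - r) hur x
    have hval : (∫ r in s..t, A * (t - r) ^ (-(ρ/2)))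
        = (A / (1 - ρ/2)) * (t - s) ^ (1 - ρ/2) := by
      rw [intervalIntegral.integral_const_mul]
      rw [intervalIntegral.integral_comp_sub_left (fun y : ℝ => y ^ (-(ρ/2))) t]
      have h3 : t - t = 0 := by ring
      rw [h3]
      rw [integral_rpow (Or.inl (by linarith))]
      rw [Real.zero_rpow (by linarith : -(ρ/2) + 1 ≠ 0)]
      rw [show -(ρ/2) + 1 = 1 - ρ/2 by ring]
      field_simp
      ring
    calc (∫ r in s..t, I r) ≤ _ := hmono
      _ = _ := hval
  · rw [intervalIntegral.integral_undef hint]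
    positivity
end
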